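/- arXiv:2105.10142 — 2 statements merged into one kernel-verified Lean document; each statement's English description precedes it below -/
import Mathlib

section
/- There exists an error indicator c on a 3×3 pixel grid — namely, c is true exactly at the four corner pixels (0,0), (0,2), (2,0), (2,2) — such that every 2×2 window has error count at most 1, hence error density at most 1/4, while the unique 3×3 window has error count 4 and error density 4/9. In particular, for the density threshold α = 2/5, every 2×2 window has error density strictly below α, yet the 3×3 window has error density strictly above α; hence certifying that all k_safe×k_safe windows have density below α does not imply the same for larger window sizes. -/
/-- The `k×k` window based at `(a,b)` in an `L×W` pixel grid. -/
def window (L W a b k : ℕ) : Finset (Fin L × Fin W) :=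
  Finset.univ.filter (fun p : Fin L × Fin W =>
    a ≤ (p.1 : ℕ) ∧ (p.1 : ℕ) < a + k ∧ b ≤ (p.2 : ℕ) ∧ (p.2 : ℕ) < b + k)

/-- The error count of the `k×k` window based at `(a,b)`. -/
def errCount (L W : ℕ) (c : Fin L × Fin W → Bool) (a b k : ℕ) : ℕ :=
  ((window L W a b k).filter (fun p => c p = true)).card

/-- Counter-example (Figure 4): on a 3×3 grid with errors exactly at the four
corners, every 2×2 window has error count at most 1 (density ≤ 1/4), while the
3×3 window has error count 4 (density 4/9); with threshold `α = 2/5`, all 2×2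
windows are strictly below `α` yet the 3×3 window is strictly above `α`. -/
theorem density_not_monotone :
    ∃ c : Fin 3 × Fin 3 → Bool,
      (∀ p : Fin 3 × Fin 3, c p = true ↔
        (((p.1 : ℕ) = 0 ∨ (p.1 : ℕ) = 2) ∧ ((p.2 : ℕ) = 0 ∨ (p.2 : ℕ) = 2))) ∧
      (∀ a b, a + 2 ≤ 3 → b + 2 ≤ 3 → errCount 3 3 c a b 2 ≤ 1) ∧
      (∀ a b, a + 2 ≤ 3 → b + 2 ≤ 3 →
        (errCount 3 3 c a b 2 : ℝ) / (2 : ℝ) ^ 2 ≤ 1 / 4) ∧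
      errCount 3 3 c 0 0 3 = 4 ∧
      (errCount 3 3 c 0 0 3 : ℝ) / (3 : ℝ) ^ 2 = 4 / 9 ∧
      (∀ a b, a + 2 ≤ 3 → b + 2 ≤ 3 →
        (errCount 3 3 c a b 2 : ℝ) / (2 : ℝ) ^ 2 < 2 / 5) ∧
      (2 / 5 : ℝ) < (errCount 3 3 c 0 0 3 : ℝ) / (3 : ℝ) ^ 2 := by
  use fun p => decide ((((p.1 : ℕ) = 0 ∨ (p.1 : ℕ) = 2) ∧ ((p.2 : ℕ) = 0 ∨ (p.2 : ℕ) = 2)))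
  have key : ∀ a b, a ≤ 1 → b ≤ 1 →
      errCount 3 3 (fun p => decide ((((p.1 : ℕ) = 0 ∨ (p.1 : ℕ) = 2) ∧ ((p.2 : ℕ) = 0 ∨ (p.2 : ℕ) = 2)))) a b 2 ≤ 1 := by
    intro a b ha hb; interval_cases a <;> interval_cases b <;> decide
  have h4 : errCount 3 3 (fun p => decide ((((p.1 : ℕ) = 0 ∨ (p.1 : ℕ) = 2) ∧ ((p.2 : ℕ) = 0 ∨ (p.2 : ℕ) = 2)))) 0 0 3 = 4 := by decide
  refine ⟨fun p => by simp, ?_, ?_, h4, ?_, ?_, ?_⟩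
  · intro a b ha hb; exact key a b (by omega) (by omega)
  · intro a b ha hb
    have := key a b (by omega) (by omega)
    have h : (errCount 3 3 (fun p => decide ((((p.1 : ℕ) = 0 ∨ (p.1 : ℕ) = 2) ∧ ((p.2 : ℕ) = 0 ∨ (p.2 : ℕ) = 2)))) a b 2 : ℝ) ≤ 1 := by exact_mod_cast this
    rw [show ((2:ℝ))^2 = 4 by norm_num]; linarith
  · rw [h4]; norm_num
  · intro a b ha hb
    have := key a b (by omega) (by omega)
    have h : (errCount 3 3 (fun p => decide ((((p.1 : ℕ) = 0 ∨ (p.1 : ℕ) = 2) ∧ ((p.2 : ℕ) = 0 ∨ (p.2 : ℕ) = 2)))) a b 2 : ℝ) ≤ 1 := by exact_mod_cast this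
    rw [show ((2:ℝ))^2 = 4 by norm_num]; linarith
  · rw [h4]; norm_num
end

section
/- Let α > 0 be a real number, let c : {0,…,L−1}×{0,…,W−1} → Bool be an error indicator on an L×W pixel grid, and let k_safe ≥ 1. For a positive integer k ≤ min(L,W), let M(k) denote the maximum error count over all k×k windows in the grid. Define a sequence of filter sizes by k₀ = min(L,W) and k_{i+1} = ⌊√(M(k_i)/α)⌋ (natural-number floor of the real square root). If for every index i with k_i ≥ k_safe one has (M(k_i) : ℝ) < α · (k_i)², then for every natural number k with k_safe ≤ k ≤ min(L,W), every k×k window in the grid has error density strictly less than α. (This is the overall soundness of the iterative refinement scheme of Section III-D: when Algorithm 1 returns safe, no filter of size at least k_safe detects an error density reaching the threshold α.) -/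
/-- The maximum error count over all `k×k` windows of the grid. -/
def maxErr (L W : ℕ) (c : Fin L × Fin W → Bool) (k : ℕ) : ℕ :=
  (Finset.range (L - k + 1) ×ˢ Finset.range (W - k + 1)).sup
    (fun ab => errCount L W c ab.1 ab.2 k)

lemma window_subset {L W a b k a' b' K : ℕ} (h1 : a' ≤ a) (h2 : a + k ≤ a' + K)
    (h3 : b' ≤ b) (h4 : b + k ≤ b' + K) : window L W a b k ⊆ window L W a' b' K := by
  intro p hp
  simp only [window, Finset.mem_filter, Finset.mem_univ, true_and] at hp ⊢
  omega

lemma errCount_mono {L W a b k a' b' K : ℕ} (c : Fin L × Fin W → Bool)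
    (h1 : a' ≤ a) (h2 : a + k ≤ a' + K) (h3 : b' ≤ b) (h4 : b + k ≤ b' + K) :
    errCount L W c a b k ≤ errCount L W c a' b' K :=
  Finset.card_le_card (Finset.filter_subset_filter _ (window_subset h1 h2 h3 h4))

lemma errCount_le_maxErr {L W a b k : ℕ} (c : Fin L × Fin W → Bool)
    (ha : a + k ≤ L) (hb : b + k ≤ W) : errCount L W c a b k ≤ maxErr L W c k := by
  have hmem : (a, b) ∈ Finset.range (L - k + 1) ×ˢ Finset.range (W - k + 1) := by
    simp only [Finset.mem_product, Finset.mem_range]; omega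
  exact Finset.le_sup (f := fun ab => errCount L W c ab.1 ab.2 k) hmem

lemma maxErr_mono {L W k K : ℕ} (c : Fin L × Fin W → Bool) (hkK : k ≤ K)
    (hL : K ≤ L) (hW : K ≤ W) : maxErr L W c k ≤ maxErr L W c K := by
  apply Finset.sup_le
  rintro ⟨a, b⟩ hab
  simp only [Finset.mem_product, Finset.mem_range] at hab
  calc errCount L W c a b k ≤ errCount L W c (min a (L - K)) (min b (W - K)) K :=
        errCount_mono c (by omega) (by omega) (by omega) (by omega)
    _ ≤ maxErr L W c K := errCount_le_maxErr c (by omega) (by omega)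

/-- Overall soundness of the iterative refinement scheme of Section III-D:
starting from filter size `min L W` and refining via
`k_{i+1} = ⌊√(M(k_i)/α)⌋`, if the density check passes at every iteration with
`k_i ≥ k_safe`, then every window of size between `k_safe` and `min L W` has
error density strictly below `α`. -/
theorem iterative_scheme_sound (L W : ℕ) (α : ℝ) (hα : 0 < α)
    (c : Fin L × Fin W → Bool) (ksafe : ℕ) (hks : 1 ≤ ksafe)
    (ks : ℕ → ℕ) (h0 : ks 0 = min L W)
    (hstep : ∀ i, ks (i + 1) =
      Nat.floor (Real.sqrt ((maxErr L W c (ks i) : ℝ) / α)))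
    (hcheck : ∀ i, ksafe ≤ ks i →
      (maxErr L W c (ks i) : ℝ) < α * (ks i : ℝ) ^ 2) :
    ∀ k a b, ksafe ≤ k → k ≤ min L W → a + k ≤ L → b + k ≤ W →
      (errCount L W c a b k : ℝ) / (k : ℝ) ^ 2 < α := by
  intro k a b hk1 hk2 ha hb
  have hk0 : 0 < k := lt_of_lt_of_le Nat.zero_lt_one (le_trans hks hk1)
  rw [div_lt_iff₀ (by positivity)]
  suffices h : ∀ n i, ks i = n → k ≤ ks i → ks i ≤ min L W →
      (errCount L W c a b k : ℝ) < α * (k : ℝ) ^ 2 by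
    exact h (ks 0) 0 rfl (h0 ▸ hk2) (le_of_eq h0)
  intro n
  induction n using Nat.strong_induction_on with
  | _ n ih =>
    intro i hn hki hmin
    have hksi : ksafe ≤ ks i := le_trans hk1 hki
    have hipos : 0 < ks i := lt_of_lt_of_le hk0 hki
    have hM := hcheck i hksi
    have hMnn : (0:ℝ) ≤ (maxErr L W c (ks i) : ℝ) / α :=
      div_nonneg (Nat.cast_nonneg _) (le_of_lt hα)
    have hsq : Real.sqrt ((maxErr L W c (ks i) : ℝ) / α) < (ks i : ℝ) := by
      rw [Real.sqrt_lt' (by exact_mod_cast hipos)]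
      rw [div_lt_iff₀ hα]
      linarith [hM]
    have hdec : ks (i + 1) < ks i := by
      rw [hstep i]
      exact (Nat.floor_lt (Real.sqrt_nonneg _)).2 hsq
    by_cases hcase : k ≤ ks (i + 1)
    · exact ih (ks (i + 1)) (hn ▸ hdec) (i + 1) rfl hcase
        (le_trans (le_of_lt hdec) hmin)
    · push_neg at hcase
      have hsk : Real.sqrt ((maxErr L W c (ks i) : ℝ) / α) < (k : ℝ) := by
        have h1 := Nat.lt_succ_floor (Real.sqrt ((maxErr L W c (ks i) : ℝ) / α))
        have h2 : (Nat.floor (Real.sqrt ((maxErr L W c (ks i) : ℝ) / α)) + 1 : ℕ) ≤ k := by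
          rw [← hstep i]; omega
        calc Real.sqrt ((maxErr L W c (ks i) : ℝ) / α)
            < ((Nat.floor (Real.sqrt ((maxErr L W c (ks i) : ℝ) / α)) + 1 : ℕ) : ℝ) := by
              exact_mod_cast h1
          _ ≤ (k : ℝ) := by exact_mod_cast h2
      have hMk : (maxErr L W c (ks i) : ℝ) < α * (k : ℝ) ^ 2 := by
        have : (maxErr L W c (ks i) : ℝ) / α < (k : ℝ) ^ 2 := by
          calc (maxErr L W c (ks i) : ℝ) / α
              = Real.sqrt ((maxErr L W c (ks i) : ℝ) / α) ^ 2 := (Real.sq_sqrt hMnn).symm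
            _ < (k : ℝ) ^ 2 := by
                exact pow_lt_pow_left₀ hsk (Real.sqrt_nonneg _) (by norm_num)
        rw [div_lt_iff₀ hα] at this
        linarith
      have hle : errCount L W c a b k ≤ maxErr L W c (ks i) :=
        le_trans (errCount_le_maxErr c ha hb)
          (maxErr_mono c hki (le_trans hmin (min_le_left _ _))
            (le_trans hmin (min_le_right _ _)))
      calc (errCount L W c a b k : ℝ) ≤ (maxErr L W c (ks i) : ℝ) := by exact_mod_cast hle
        _ < α * (k : ℝ) ^ 2 := hMk
end
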